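/- O(√n) iterations suffice: consider any process that, starting from the empty matching in a graph on n vertices, in each iteration augments a maximal set of vertex-disjoint shortest augmenting paths (so that the shortest augmenting path length strictly increases each iteration). Then after at most 2⌈√(n/2)⌉ + 2 iterations the matching is maximum. Formally: if after k iterations every augmenting path has length ≥ 2k - 1, and a matching admitting no augmenting path shorter than 2k - 1 is within n/(2k) of maximum, then the total number of iterations needed to reach a maximum matching is O(√n). -/

import Mathlib

open SimpleGraph

variable {V : Type*}

/-- `M` is a matching in the simple graph `G`: a set of edges of `G` that are
pairwise vertex-disjoint. -/
def IsMatchingSet (G : SimpleGraph V) (M : Set (Sym2 V)) : Prop :=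
  M ⊆ G.edgeSet ∧ ∀ v : V, {e | e ∈ M ∧ v ∈ e}.Subsingleton

/-- A vertex is free (unmatched) if no matching edge contains it. -/
def Unmatched (M : Set (Sym2 V)) (v : V) : Prop :=
  ∀ e ∈ M, v ∉ e

/-- A walk is alternating w.r.t. `M` if its edges alternate non-matching /
matching, starting with a non-matching edge. -/
def IsAlternating (G : SimpleGraph V) (M : Set (Sym2 V)) {u v : V} (p : G.Walk u v) : Prop :=
  ∀ (i : ℕ) (h : i < p.edges.length), (p.edges.get ⟨i, h⟩ ∈ M ↔ Odd i)

/-- An `M`-augmenting path: a simple path of odd length, alternating starting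
(and hence ending) with non-matching edges, whose two endpoints are free. -/
def IsAugPath (G : SimpleGraph V) (M : Set (Sym2 V)) {u v : V} (p : G.Walk u v) : Prop :=
  p.IsPath ∧ Odd p.length ∧ IsAlternating G M p ∧ Unmatched M u ∧ Unmatched M v

/-- Length of a shortest even-length alternating simple path from a free vertex to `v`. -/
noncomputable def Lcp (G : SimpleGraph V) (M : Set (Sym2 V)) (v : V) : ℕ∞ :=
  sInf {n : ℕ∞ | ∃ (f : V) (p : G.Walk f v), Unmatched M f ∧ p.IsPath ∧
    IsAlternating G M p ∧ Even p.length ∧ (p.length : ℕ∞) = n}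

/-- Length of a shortest odd-length alternating simple path from a free vertex to `v`. -/
noncomputable def LcpOdd (G : SimpleGraph V) (M : Set (Sym2 V)) (v : V) : ℕ∞ :=
  sInf {n : ℕ∞ | ∃ (f : V) (p : G.Walk f v), Unmatched M f ∧ p.IsPath ∧
    IsAlternating G M p ∧ Odd p.length ∧ (p.length : ℕ∞) = n}

namespace HK99

set_option linter.unusedSectionVars false

variable {V : Type*} [DecidableEq V]

open scoped Classical in
/-- The unique `P`-neighbour of `v`, if any (for `P` a partial matching). -/
noncomputable def pstep (P : Finset (Sym2 V)) (v : V) : Option V :=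
  if h : ∃ w, s(v, w) ∈ P then some h.choose else none

/-- Edges of `P` at each vertex are unique. -/
def Uniq (P : Finset (Sym2 V)) : Prop :=
  ∀ (v : V), ∀ e ∈ P, ∀ f ∈ P, v ∈ e → v ∈ f → e = f

lemma pstep_mem {P : Finset (Sym2 V)} {v w : V} (h : pstep P v = some w) : s(v, w) ∈ P := by
  classical
  unfold pstep at h
  split_ifs at h with h'
  injection h with h2
  exact h2 ▸ h'.choose_spec

lemma pstep_eq_some {P : Finset (Sym2 V)} (hP : Uniq P) {v w : V} (hw : s(v, w) ∈ P) :
    pstep P v = some w := by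
  classical
  have h' : ∃ z, s(v, z) ∈ P := ⟨w, hw⟩
  unfold pstep
  rw [dif_pos h']
  have := hP v _ h'.choose_spec _ hw (by simp) (by simp)
  exact congrArg some (Sym2.congr_right.mp this)

lemma pstep_none {P : Finset (Sym2 V)} {v : V} (h : pstep P v = none) (w : V) :
    s(v, w) ∉ P := by
  intro hw
  classical
  unfold pstep at h
  rw [dif_pos ⟨w, hw⟩] at h
  simp at h

lemma pstep_eq_none {P : Finset (Sym2 V)} {v : V} (h : ∀ w, s(v, w) ∉ P) :
    pstep P v = none := by
  classical
  unfold pstep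
  rw [dif_neg]
  rintro ⟨w, hw⟩
  exact h w hw

/-- the two sides of the symmetric difference of matchings `M`, `N`. -/
def Dside (M N : Finset (Sym2 V)) : Bool → Finset (Sym2 V)
  | true => N \ M
  | false => M \ N

lemma Dside_swap (M N : Finset (Sym2 V)) (b : Bool) : Dside N M b = Dside M N (!b) := by
  cases b <;> rfl

/-- One step of the forced alternating walk. -/
noncomputable def Fstep (M N : Finset (Sym2 V)) (st : V × Bool) : Option (V × Bool) :=
  (pstep (Dside M N st.2) st.1).map (fun w => (w, !st.2))

/-- The forced alternating walk starting at `u` (expecting an `N \ M` edge first). -/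
noncomputable def orb (M N : Finset (Sym2 V)) (u : V) : ℕ → Option (V × Bool)
  | 0 => some (u, true)
  | n + 1 => (orb M N u n).bind (Fstep M N)

variable {M N : Finset (Sym2 V)} {u : V}

lemma orb_zero : orb M N u 0 = some (u, true) := rfl

lemma orb_succ (n : ℕ) : orb M N u (n + 1) = (orb M N u n).bind (Fstep M N) := rfl

lemma orb_succ_some {n : ℕ} {t : V × Bool} (h : orb M N u (n + 1) = some t) :
    ∃ st, orb M N u n = some st ∧ Fstep M N st = some t := by
  rw [orb_succ] at h
  cases h' : orb M N u n with
  | none => rw [h'] at h; simp at h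
  | some st => rw [h'] at h; exact ⟨st, rfl, h⟩

lemma orb_none_mono {n m : ℕ} (hnm : n ≤ m) (h : orb M N u n = none) :
    orb M N u m = none := by
  induction m with
  | zero => exact (Nat.le_zero.mp hnm) ▸ h
  | succ m ih =>
    rcases Nat.lt_or_ge n (m + 1) with h' | h'
    · have := ih (Nat.lt_succ_iff.mp h')
      rw [orb_succ, this]; rfl
    · have : n = m + 1 := le_antisymm hnm h'
      exact this ▸ h

lemma orb_some_of_le {n m : ℕ} (hmn : m ≤ n) {st : V × Bool} (h : orb M N u n = some st) :
    ∃ st', orb M N u m = some st' := by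
  cases h' : orb M N u m with
  | none => rw [orb_none_mono hmn h'] at h; simp at h
  | some st' => exact ⟨st', rfl⟩

lemma Fstep_some {st t : V × Bool} (h : Fstep M N st = some t) :
    t.2 = !st.2 ∧ s(st.1, t.1) ∈ Dside M N st.2 := by
  unfold Fstep at h
  cases hp : pstep (Dside M N st.2) st.1 with
  | none => rw [hp] at h; simp at h
  | some z =>
    rw [hp] at h
    simp only [Option.map_some] at h
    cases h
    exact ⟨rfl, pstep_mem hp⟩

lemma orb_flag {n : ℕ} {v : V} {b : Bool} (h : orb M N u n = some (v, b)) :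
    b = true ↔ Even n := by
  induction n generalizing v b with
  | zero =>
    rw [orb_zero] at h
    obtain ⟨rfl, rfl⟩ : u = v ∧ true = b := by simpa using h
    simp
  | succ n ih =>
    obtain ⟨⟨x, c⟩, hx, hf⟩ := orb_succ_some h
    have hb : b = !c := (Fstep_some hf).1
    have := ih hx
    rw [Nat.even_add_one]
    cases c <;> simp_all

lemma orb_step {n : ℕ} {v w : V} {b c : Bool} (h1 : orb M N u n = some (v, b))
    (h2 : orb M N u (n + 1) = some (w, c)) :
    c = !b ∧ s(v, w) ∈ Dside M N b := by
  rw [orb_succ, h1, Option.bind_some] at h2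
  exact ⟨(Fstep_some h2).1, (Fstep_some h2).2⟩

section Inj

variable (hU : ∀ b, Uniq (Dside M N b))
variable (hu : pstep (Dside M N false) u = none)

include hU in
lemma Fstep_inj {s1 s2 t : V × Bool} (h1 : Fstep M N s1 = some t) (h2 : Fstep M N s2 = some t) :
    s1 = s2 := by
  obtain ⟨hb1, he1⟩ := Fstep_some h1
  obtain ⟨hb2, he2⟩ := Fstep_some h2
  have hb : s1.2 = s2.2 := by
    cases hs1 : s1.2 <;> cases hs2 : s2.2 <;> simp_all
  rw [hb] at he1
  have heq := hU s2.2 t.1 _ he1 _ he2 (by simp) (by simp)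
  have hv : s1.1 = s2.1 := by
    have h' : s(t.1, s1.1) = s(t.1, s2.1) := by
      rw [Sym2.eq_swap, heq, Sym2.eq_swap]
    exact Sym2.congr_right.mp h'
  exact Prod.ext hv hb

include hU hu in
lemma Fstep_not_start {st : V × Bool} : Fstep M N st ≠ some (u, true) := by
  intro h
  obtain ⟨hb, he⟩ := Fstep_some h
  have hb2 : st.2 = false := by cases hst : st.2 <;> simp_all
  rw [hb2] at he
  have : s(u, st.1) ∈ Dside M N false := by rw [Sym2.eq_swap]; exact he
  exact pstep_none hu st.1 this

include hU hu in
lemma orb_inj {i j : ℕ} {st : V × Bool} (hi : orb M N u i = some st)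
    (hj : orb M N u j = some st) : i = j := by
  have key : ∀ i j (st : V × Bool), i ≤ j → orb M N u i = some st → orb M N u j = some st →
      i = j := by
    intro i
    induction i with
    | zero =>
      intro j st _ hi hj
      rw [orb_zero] at hi
      cases j with
      | zero => rfl
      | succ j =>
        obtain ⟨st', _, hf⟩ := orb_succ_some hj
        injection hi with hi'
        rw [← hi'] at hf
        exact absurd hf (Fstep_not_start hU hu)
    | succ i ih =>
      intro j st hij hi hj
      cases j with
      | zero =>
        omega
      | succ j =>
        obtain ⟨s1, ho1, hf1⟩ := orb_succ_some hi
        obtain ⟨s2, ho2, hf2⟩ := orb_succ_some hj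
        have : s1 = s2 := Fstep_inj hU hf1 hf2
        rw [this] at ho1
        have := ih j s2 (by omega) ho1 ho2
        omega
  rcases le_total i j with h | h
  · exact key i j st h hi hj
  · exact (key j i st h hj hi).symm

include hU hu in
lemma orb_exists_none [Fintype V] : ∃ n, orb M N u n = none := by
  by_contra hc
  push_neg at hc
  have hsome : ∀ n, (orb M N u n).isSome := by
    intro n
    cases h : orb M N u n with
    | none => exact absurd h (hc n)
    | some s => rfl
  have hinj : Function.Injective (fun n => (orb M N u n).get (hsome n)) := by
    intro i j hij
    have hi : orb M N u i = some ((orb M N u i).get (hsome i)) := by simp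
    have hj : orb M N u j = some ((orb M N u j).get (hsome j)) := by simp
    simp only at hij
    rw [hij] at hi
    exact orb_inj hU hu hi hj
  obtain ⟨i, j, hne, heq⟩ := Finite.exists_ne_map_eq_of_infinite
    (fun n => (orb M N u n).get (hsome n))
  exact hne (hinj heq)

include hU hu in
lemma orb_terminal [Fintype V] :
    ∃ (T : ℕ) (st : V × Bool), orb M N u T = some st ∧ orb M N u (T + 1) = none ∧
      ∀ m, (orb M N u m).isSome ↔ m ≤ T := by
  classical
  have hex : ∃ n, orb M N u n = none := orb_exists_none hU hu
  have h0 : orb M N u (Nat.find hex) = none := Nat.find_spec hex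
  have hpos : Nat.find hex ≠ 0 := by
    intro h
    rw [h, orb_zero] at h0
    simp at h0
  set T := Nat.find hex - 1 with hTdef
  have hfind : Nat.find hex = T + 1 := by omega
  rw [hfind] at h0
  have hTsome : orb M N u T ≠ none := Nat.find_min hex (by omega)
  cases hT : orb M N u T with
  | none => exact absurd hT hTsome
  | some st =>
    refine ⟨T, st, hT, h0, fun m => ?_⟩
    constructor
    · intro hm
      by_contra hmT
      have : T + 1 ≤ m := by omega
      have := orb_none_mono this h0
      rw [this] at hm
      simp at hm
    · intro hm
      obtain ⟨st', h'⟩ := orb_some_of_le hm hT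
      rw [h']
      rfl

lemma orb_terminal_unique {a b : ℕ} {s1 s2 : V × Bool}
    (ha : orb M N u a = some s1) (ha' : orb M N u (a + 1) = none)
    (hb : orb M N u b = some s2) (hb' : orb M N u (b + 1) = none) : a = b ∧ s1 = s2 := by
  have hab : a = b := by
    rcases lt_trichotomy a b with h | h | h
    · have := orb_none_mono (by omega : a + 1 ≤ b) ha'
      rw [this] at hb; simp at hb
    · exact h
    · have := orb_none_mono (by omega : b + 1 ≤ a) hb'
      rw [this] at ha; simp at ha
  subst hab
  rw [ha] at hb
  exact ⟨rfl, Option.some_inj.mp hb⟩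

end Inj

section VertexInj

variable (hU : ∀ b, Uniq (Dside M N b))
variable (hu : pstep (Dside M N false) u = none)
variable (hirr : ∀ (b : Bool) (v : V), s(v, v) ∉ Dside M N b)

include hU hu hirr in
lemma orb_vertex_inj {i j : ℕ} {v : V} {bi bj : Bool} (hi : orb M N u i = some (v, bi))
    (hj : orb M N u j = some (v, bj)) : i = j := by
  have key : ∀ i j (v : V) (bi bj : Bool), i ≤ j → orb M N u i = some (v, bi) →
      orb M N u j = some (v, bj) → i = j := by
    intro i j v bi bj hij hi hj
    by_contra hne
    have hlt : i < j := lt_of_le_of_ne hij hne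
    have hbne : bi ≠ bj := by
      intro h
      rw [h] at hi
      exact hne (orb_inj hU hu hi hj)
    have hbj : bj = !bi := by cases bi <;> cases bj <;> simp_all
    have hodd : Odd (j - i) := by
      have h1 := orb_flag hi
      have h2 := orb_flag hj
      rw [hbj] at h2
      rw [Nat.even_iff] at h1 h2
      rw [Nat.odd_iff]
      cases bi <;> simp_all <;> omega
    obtain ⟨m, hm⟩ := hodd
    have hjm : j = i + 2 * m + 1 := by omega
    have claim : ∀ d, d ≤ m → ∃ (x : V) (c : Bool),
        orb M N u (i + d) = some (x, c) ∧ orb M N u (j - d) = some (x, !c) := by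
      intro d
      induction d with
      | zero =>
        intro _
        refine ⟨v, bi, by simpa using hi, ?_⟩
        rw [← hbj]
        simpa using hj
      | succ d ih =>
        intro hdm
        obtain ⟨x, c, hx1, hx2⟩ := ih (by omega)
        have hle1 : i + d + 1 ≤ j := by omega
        obtain ⟨⟨y, cy⟩, hy⟩ := orb_some_of_le hle1 hj
        obtain ⟨hcy, hey⟩ := orb_step hx1 hy
        have hle2 : j - d - 1 ≤ j := by omega
        obtain ⟨⟨z, cz⟩, hz⟩ := orb_some_of_le hle2 hj
        have hzstep : orb M N u ((j - d - 1) + 1) = some (x, !c) := by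
          have : (j - d - 1) + 1 = j - d := by omega
          rw [this]; exact hx2
        obtain ⟨hcz, hez⟩ := orb_step hz hzstep
        have hczc : cz = c := by cases c <;> cases cz <;> simp_all
        rw [hczc] at hez
        have hxz : s(x, z) ∈ Dside M N c := by rw [Sym2.eq_swap]; exact hez
        have hyz : y = z := by
          have heq := hU c x _ hey _ hxz (Sym2.mem_mk_left x y) (Sym2.mem_mk_left x z)
          exact Sym2.congr_right.mp heq
        refine ⟨y, !c, ?_, ?_⟩
        · rw [hcy] at hy
          have : i + (d + 1) = i + d + 1 := by omega
          rw [this]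
          exact hy
        · have hjd : j - (d + 1) = j - d - 1 := by omega
          rw [← hyz, hczc] at hz
          rw [hjd, Bool.not_not]
          exact hz
    obtain ⟨x, c, hx1, hx2⟩ := claim m le_rfl
    have hjm2 : j - m = i + m + 1 := by omega
    rw [hjm2] at hx2
    obtain ⟨_, hee⟩ := orb_step hx1 hx2
    exact hirr c x hee
  rcases le_total i j with h | h
  · exact key i j v bi bj h hi hj
  · exact (key j i v bj bi h hj hi).symm

end VertexInj

section Reverse

variable (hU : ∀ b, Uniq (Dside M N b))

include hU in
/-- The forced walk run backwards from a terminal with flag `true`, with the roles of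
`M` and `N` swapped, retraces the original walk. -/
lemma orb_reverse {T : ℕ} {w : V} (hT : orb M N u T = some (w, true)) :
    ∀ d, d ≤ T → orb N M w d = orb M N u (T - d) := by
  intro d
  induction d with
  | zero => intro _; simpa [orb_zero] using hT.symm
  | succ d ih =>
    intro hd
    have hTd : T - d ≤ T := by omega
    obtain ⟨⟨x, b⟩, hx⟩ := orb_some_of_le hTd hT
    have hrec := ih (by omega)
    rw [hx] at hrec
    have hTd1 : T - d - 1 ≤ T := by omega
    obtain ⟨⟨y, b'⟩, hy⟩ := orb_some_of_le hTd1 hT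
    have hstep : orb M N u ((T - d - 1) + 1) = some (x, b) := by
      have : (T - d - 1) + 1 = T - d := by omega
      rw [this]; exact hx
    obtain ⟨hb, he⟩ := orb_step hy hstep
    have hD : s(x, y) ∈ Dside N M b := by
      rw [Dside_swap, hb, Bool.not_not, Sym2.eq_swap]
      exact he
    have hps : pstep (Dside N M b) x = some y := by
      apply pstep_eq_some _ hD
      intro v e heM f hfM hv hv'
      rw [Dside_swap] at heM hfM
      exact hU (!b) v e heM f hfM hv hv'
    rw [orb_succ, hrec, Option.bind_some]
    unfold Fstep
    simp only [hps, Option.map_some]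
    have : T - (d + 1) = T - d - 1 := by omega
    rw [this, hy, hb, Bool.not_not]

end Reverse

section WalkBuild

variable {G : SimpleGraph V}
variable (hGD : ∀ (b : Bool), ∀ e ∈ Dside M N b, e ∈ G.edgeSet)
variable (hU : ∀ b, Uniq (Dside M N b))
variable (hu : pstep (Dside M N false) u = none)
variable (hirr : ∀ (b : Bool) (v : V), s(v, v) ∉ Dside M N b)

include hGD hU hu hirr in
lemma orb_walk {T : ℕ} (hTs : ∀ m, (orb M N u m).isSome ↔ m ≤ T) :
    ∀ (d t : ℕ) (v : V) (b : Bool), t + d = T → orb M N u t = some (v, b) →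
    ∃ (w : V) (c : Bool) (p : G.Walk v w), orb M N u T = some (w, c) ∧ p.length = d ∧
      p.support.Nodup ∧
      (∀ z ∈ p.support, ∃ (i : ℕ) (bz : Bool), t ≤ i ∧ i ≤ T ∧ orb M N u i = some (z, bz)) ∧
      (∀ (i : ℕ) (h : i < p.edges.length), ∃ (x y : V) (bx : Bool),
        orb M N u (t + i) = some (x, bx) ∧ orb M N u (t + i + 1) = some (y, !bx) ∧
        p.edges.get ⟨i, h⟩ = s(x, y)) := by
  intro d
  induction d with
  | zero =>
    intro t v b ht hv
    have htT : t = T := by omega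
    refine ⟨v, b, Walk.nil, htT ▸ hv, rfl, by simp, ?_, ?_⟩
    · intro z hz
      simp only [Walk.support_nil, List.mem_singleton] at hz
      exact ⟨t, b, le_rfl, by omega, hz ▸ hv⟩
    · intro i h
      simp at h
  | succ d ih =>
    intro t v b ht hv
    have ht1 : t + 1 ≤ T := by omega
    have hnext : (orb M N u (t + 1)).isSome := (hTs (t + 1)).mpr ht1
    obtain ⟨⟨v', b'⟩, hv'⟩ : ∃ st, orb M N u (t + 1) = some st := by
      cases h1 : orb M N u (t + 1) with
      | none => rw [h1] at hnext; simp at hnext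
      | some st => exact ⟨st, rfl⟩
    obtain ⟨hb', he⟩ := orb_step hv hv'
    have hadj : G.Adj v v' := (SimpleGraph.mem_edgeSet G).mp (hGD b _ he)
    rw [hb'] at hv'
    obtain ⟨w, c, p', hTw, hlen, hnd, hsup, hedg⟩ := ih (t + 1) v' (!b) (by omega) hv'
    refine ⟨w, c, Walk.cons hadj p', hTw, by simp [hlen], ?_, ?_, ?_⟩
    · rw [Walk.support_cons, List.nodup_cons]
      refine ⟨?_, hnd⟩
      intro hvmem
      obtain ⟨i, bz, hi1, hi2, hiz⟩ := hsup v hvmem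
      have := orb_vertex_inj hU hu hirr hv hiz
      omega
    · intro z hz
      rw [Walk.support_cons, List.mem_cons] at hz
      rcases hz with rfl | hz
      · exact ⟨t, b, le_rfl, by omega, hv⟩
      · obtain ⟨i, bz, hi1, hi2, hiz⟩ := hsup z hz
        exact ⟨i, bz, by omega, hi2, hiz⟩
    · intro i h
      have hedge : (Walk.cons hadj p').edges = s(v, v') :: p'.edges := by simp
      have hget := List.get_of_eq hedge ⟨i, h⟩
      have hlen2 : i < (s(v, v') :: p'.edges).length := by
        rw [← hedge]; exact h
      cases i with
      | zero =>
        refine ⟨v, v', b, by simpa using hv, by simpa using hv', ?_⟩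
        rw [hget]
        rfl
      | succ i =>
        have hip : i < p'.edges.length := by
          simp only [List.length_cons] at hlen2; omega
        obtain ⟨x, y, bx, h1, h2, h3⟩ := hedg i hip
        refine ⟨x, y, bx, ?_, ?_, ?_⟩
        · have heq : t + (i + 1) = t + 1 + i := by omega
          rw [heq]; exact h1
        · have heq : t + (i + 1) + 1 = t + 1 + i + 1 := by omega
          rw [heq]; exact h2
        · rw [hget]
          exact h3
end WalkBuild

section Dichotomy

variable {G : SimpleGraph V}

lemma some_pair_inj {α β : Type*} {a b : α} {x y : β}
    (h : (some (a, x) : Option (α × β)) = some (b, y)) : a = b ∧ x = y := by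
  have h' : (a, x) = (b, y) := Option.some_inj.mp h
  exact ⟨congrArg Prod.fst h', congrArg Prod.snd h'⟩

lemma uniq_of_matching {P Q : Finset (Sym2 V)} (hP : IsMatchingSet G ↑P) (h : Q ⊆ P) :
    Uniq Q := by
  intro v e he f hf hv hv'
  exact hP.2 v ⟨Finset.mem_coe.mpr (h he), hv⟩ ⟨Finset.mem_coe.mpr (h hf), hv'⟩

lemma matching_bundle (hM : IsMatchingSet G ↑M) (hN : IsMatchingSet G ↑N) :
    (∀ b, Uniq (Dside M N b)) ∧ (∀ (b : Bool), ∀ e ∈ Dside M N b, e ∈ G.edgeSet) ∧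
      (∀ (b : Bool) (v : V), s(v, v) ∉ Dside M N b) := by
  have hU : ∀ b, Uniq (Dside M N b) := by
    intro b
    cases b
    · exact uniq_of_matching hM Finset.sdiff_subset
    · exact uniq_of_matching hN Finset.sdiff_subset
  have hGD : ∀ (b : Bool), ∀ e ∈ Dside M N b, e ∈ G.edgeSet := by
    intro b e he
    cases b
    · exact hM.1 (Finset.mem_coe.mpr (Finset.sdiff_subset he))
    · exact hN.1 (Finset.mem_coe.mpr (Finset.sdiff_subset he))
  refine ⟨hU, hGD, fun b v hv => ?_⟩
  have := (SimpleGraph.mem_edgeSet G).mp (hGD b _ hv)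
  exact G.irrefl this

lemma unmatched_pstep_none (hu : Unmatched (↑M : Set (Sym2 V)) u) :
    pstep (Dside M N false) u = none := by
  apply pstep_eq_none
  intro w hw
  have : s(u, w) ∈ M := (Finset.mem_sdiff.mp hw).1
  exact hu _ (Finset.mem_coe.mpr this) (Sym2.mem_mk_left u w)

lemma main_dichotomy [Fintype V] (hM : IsMatchingSet G ↑M) (hN : IsMatchingSet G ↑N)
    (hu : Unmatched (↑M : Set (Sym2 V)) u) (hu2 : ∃ z, s(u, z) ∈ N \ M) :
    (∃ (w : V) (p : G.Walk u w), IsAugPath G ↑M p ∧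
        (∀ e ∈ p.edges, e ∈ N \ M ∪ M \ N) ∧
        (∀ z ∈ p.support, ∃ f ∈ p.edges, f ∈ N ∧ z ∈ f) ∧
        (∀ z ∈ p.support, z ≠ u → z ≠ w → ∃ f ∈ p.edges, f ∈ M ∧ z ∈ f)) ∨
    (∃ (w : V) (Tw : ℕ), Unmatched (↑N : Set (Sym2 V)) w ∧ (∃ e ∈ M, w ∈ e) ∧
        orb N M w Tw = some (u, true) ∧ orb N M w (Tw + 1) = none) := by
  classical
  obtain ⟨hU, hGD, hirr⟩ := matching_bundle hM hN
  have hups : pstep (Dside M N false) u = none := unmatched_pstep_none hu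
  obtain ⟨T, ⟨w, c⟩, hT, hT1, hTs⟩ := orb_terminal hU hups (M := M) (N := N) (u := u)
  have hpnone : pstep (Dside M N c) w = none := by
    rw [orb_succ, hT, Option.bind_some] at hT1
    unfold Fstep at hT1
    exact Option.map_eq_none_iff.mp hT1
  -- T ≥ 1
  have h1s : ∃ z, orb M N u 1 = some (z, false) := by
    obtain ⟨z, hz⟩ := hu2
    have : pstep (Dside M N true) u = some z := pstep_eq_some (hU true) hz
    refine ⟨z, ?_⟩
    rw [orb_succ, orb_zero, Option.bind_some]
    unfold Fstep
    simp [this]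
  have hTpos : 1 ≤ T := by
    obtain ⟨z, hz⟩ := h1s
    exact (hTs 1).mp (by rw [hz]; rfl)
  -- the state before the terminal one
  obtain ⟨⟨x, bx⟩, hx⟩ := orb_some_of_le (by omega : T - 1 ≤ T) hT
  have hxstep : orb M N u ((T - 1) + 1) = some (w, c) := by
    have : T - 1 + 1 = T := by omega
    rw [this]; exact hT
  obtain ⟨hcb, hex⟩ := orb_step hx hxstep
  cases c with
  | false =>
    -- success: augmenting path
    left
    have hbx : bx = true := by
      cases bx with
      | false => simp at hcb
      | true => rfl
    rw [hbx] at hex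
    -- w is M-free
    have hwfree : Unmatched (↑M : Set (Sym2 V)) w := by
      intro e he hwe
      have heM : e ∈ M := Finset.mem_coe.mp he
      obtain ⟨z, rfl⟩ := Sym2.mem_iff_exists.mp hwe
      by_cases heN : s(w, z) ∈ N
      · have hxwN : s(x, w) ∈ N := (Finset.mem_sdiff.mp hex).1
        have heq : s(w, z) = s(x, w) := hN.2 w ⟨Finset.mem_coe.mpr heN, Sym2.mem_mk_left w z⟩
          ⟨Finset.mem_coe.mpr hxwN, Sym2.mem_mk_right x w⟩
        rw [heq] at heM
        exact (Finset.mem_sdiff.mp hex).2 heM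
      · have : s(w, z) ∈ Dside M N false := Finset.mem_sdiff.mpr ⟨heM, heN⟩
        exact pstep_none hpnone z this
    -- build the walk
    obtain ⟨w', c', p, hTw', hplen, hnd, hsup, hedg⟩ :=
      orb_walk hGD hU hups hirr hTs T 0 u true (by omega) orb_zero
    rw [hT] at hTw'
    have hw' : w = w' := (some_pair_inj hTw').1
    have hc' : false = c' := (some_pair_inj hTw').2
    subst hw'
    have hedgeslen : p.edges.length = T := by rw [SimpleGraph.Walk.length_edges, hplen]
    -- key edge extraction
    have EA : ∀ i, i < T → ∀ (z : V) (bz : Bool), orb M N u i = some (z, bz) →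
        ∃ (y : V), orb M N u (i + 1) = some (y, !bz) ∧ s(z, y) ∈ p.edges ∧
          s(z, y) ∈ Dside M N bz := by
      intro i hi z bz hz
      obtain ⟨a, b2, ba, h1, h2, h3⟩ := hedg i (by omega)
      rw [Nat.zero_add] at h1 h2
      obtain ⟨rfl, rfl⟩ : a = z ∧ ba = bz := some_pair_inj (h1.symm.trans hz)
      have hmem : p.edges.get ⟨i, by omega⟩ ∈ p.edges := List.get_mem _ _
      rw [h3] at hmem
      exact ⟨b2, h2, hmem, (orb_step h1 h2).2⟩
    -- alternation
    have halt : IsAlternating G (↑M) p := by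
      intro i hilen
      obtain ⟨a, b2, ba, h1, h2, h3⟩ := hedg i hilen
      rw [Nat.zero_add] at h1 h2
      have hab := (orb_step h1 h2).2
      have hflag := orb_flag h1
      rw [h3]
      cases ba with
      | false =>
        have habM : s(a, b2) ∈ M \ N := hab
        have hoi : Odd i := Nat.not_even_iff_odd.mp (fun hev => by simpa using hflag.mpr hev)
        constructor
        · intro _; exact hoi
        · intro _; exact Finset.mem_coe.mpr (Finset.mem_sdiff.mp habM).1
      | true =>
        have habN : s(a, b2) ∈ N \ M := hab
        have hievn : Even i := hflag.mp rfl
        constructor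
        · intro hmm
          exact absurd (Finset.mem_coe.mp hmm) (Finset.mem_sdiff.mp habN).2
        · intro hodd
          exact absurd hievn (Nat.not_even_iff_odd.mpr hodd)
    have hoddT : Odd T := by
      have := orb_flag hT
      simp only [Bool.false_eq_true, false_iff] at this
      exact Nat.not_even_iff_odd.mp this
    refine ⟨w, p, ⟨(SimpleGraph.Walk.isPath_def p).mpr hnd, by rw [hplen]; exact hoddT,
      halt, hu, hwfree⟩, ?_, ?_, ?_⟩
    · -- edges in symmetric difference
      intro e he
      obtain ⟨i, hgi⟩ := List.mem_iff_get.mp he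
      obtain ⟨a, b2, ba, h1, h2, h3⟩ := hedg i.1 i.2
      rw [Nat.zero_add] at h1 h2
      have hab := (orb_step h1 h2).2
      rw [← hgi, h3]
      cases ba
      · exact Finset.mem_union_right _ hab
      · exact Finset.mem_union_left _ hab
    · -- every support vertex is covered by an N-edge of p
      intro z hz
      obtain ⟨i, bz, _, hiT, hiz⟩ := hsup z hz
      cases bz with
      | true =>
        have hiT' : i < T := by
          rcases Nat.lt_or_ge i T with h | h
          · exact h
          · exfalso
            have : i = T := by omega
            rw [this, hT] at hiz
            simpa using hiz
        obtain ⟨y, _, hmem, hD⟩ := EA i hiT' z true hiz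
        exact ⟨s(z, y), hmem, (Finset.mem_sdiff.mp hD).1, Sym2.mem_mk_left z y⟩
      | false =>
        have hipos : 1 ≤ i := by
          rcases Nat.eq_zero_or_pos i with h | h
          · exfalso
            rw [h, orb_zero] at hiz
            simpa using hiz
          · exact h
        obtain ⟨⟨a, ba⟩, ha⟩ := orb_some_of_le (by omega : i - 1 ≤ T) hT
        have hstep' : orb M N u ((i - 1) + 1) = some (z, false) := by
          have : i - 1 + 1 = i := by omega
          rw [this]; exact hiz
        have hba : ba = true := by
          have hh := (orb_step ha hstep').1
          cases ba with
          | true => rfl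
          | false => simp at hh
        rw [hba] at ha
        obtain ⟨y, hy2, hmem, hD⟩ := EA (i - 1) (by omega) a true ha
        have hyz : y = z := (some_pair_inj (hy2.symm.trans hstep')).1
        rw [hyz] at hmem hD
        exact ⟨s(a, z), hmem, (Finset.mem_sdiff.mp hD).1, Sym2.mem_mk_right a z⟩
    · -- every internal support vertex is covered by an M-edge of p
      intro z hz hzu hzw
      obtain ⟨i, bz, _, hiT, hiz⟩ := hsup z hz
      have hipos : 1 ≤ i := by
        rcases Nat.eq_zero_or_pos i with h | h
        · exfalso
          rw [h, orb_zero] at hiz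
          exact hzu (congrArg Prod.fst (Option.some_inj.mp hiz)).symm
        · exact h
      have hiT' : i < T := by
        rcases Nat.lt_or_ge i T with h | h
        · exact h
        · exfalso
          have : i = T := by omega
          rw [this, hT] at hiz
          exact hzw (congrArg Prod.fst (Option.some_inj.mp hiz)).symm
      cases bz with
      | false =>
        obtain ⟨y, _, hmem, hD⟩ := EA i hiT' z false hiz
        exact ⟨s(z, y), hmem, (Finset.mem_sdiff.mp hD).1, Sym2.mem_mk_left z y⟩
      | true =>
        obtain ⟨⟨a, ba⟩, ha⟩ := orb_some_of_le (by omega : i - 1 ≤ T) hT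
        have hstep' : orb M N u ((i - 1) + 1) = some (z, true) := by
          have : i - 1 + 1 = i := by omega
          rw [this]; exact hiz
        have hba : ba = false := by
          have hh := (orb_step ha hstep').1
          cases ba with
          | false => rfl
          | true => simp at hh
        rw [hba] at ha
        obtain ⟨y, hy2, hmem, hD⟩ := EA (i - 1) (by omega) a false ha
        have hyz : y = z := (some_pair_inj (hy2.symm.trans hstep')).1
        rw [hyz] at hmem hD
        exact ⟨s(a, z), hmem, (Finset.mem_sdiff.mp hD).1, Sym2.mem_mk_right a z⟩
  | true =>
    -- failure: reversal data
    right
    have hbx : bx = false := by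
      cases bx with
      | true => simp at hcb
      | false => rfl
    rw [hbx] at hex
    -- w is N-free
    have hwNfree : Unmatched (↑N : Set (Sym2 V)) w := by
      intro e he hwe
      have heN : e ∈ N := Finset.mem_coe.mp he
      obtain ⟨z, rfl⟩ := Sym2.mem_iff_exists.mp hwe
      by_cases heM : s(w, z) ∈ M
      · have hxwM : s(x, w) ∈ M := (Finset.mem_sdiff.mp hex).1
        have heq : s(w, z) = s(x, w) := hM.2 w ⟨Finset.mem_coe.mpr heM, Sym2.mem_mk_left w z⟩
          ⟨Finset.mem_coe.mpr hxwM, Sym2.mem_mk_right x w⟩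
        rw [heq] at heN
        exact (Finset.mem_sdiff.mp hex).2 heN
      · have : s(w, z) ∈ Dside M N true := Finset.mem_sdiff.mpr ⟨heN, heM⟩
        exact pstep_none hpnone z this
    have hwM : ∃ e ∈ M, w ∈ e := ⟨s(x, w), (Finset.mem_sdiff.mp hex).1, Sym2.mem_mk_right x w⟩
    have hrev := orb_reverse hU hT
    have hrevT : orb N M w T = some (u, true) := by
      have := hrev T le_rfl
      rw [Nat.sub_self, orb_zero] at this
      exact this
    have hrevT1 : orb N M w (T + 1) = none := by
      rw [orb_succ, hrevT, Option.bind_some]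
      unfold Fstep
      have : Dside N M true = Dside M N false := Dside_swap M N true
      simp only [this]
      rw [hups]
      rfl
    exact ⟨w, T, hwNfree, hwM, hrevT, hrevT1⟩

end Dichotomy

section Berge

variable {G : SimpleGraph V}

open scoped Classical in
noncomputable def cover [Fintype V] (P : Finset (Sym2 V)) : Finset V :=
  P.biUnion (fun e => Finset.univ.filter (· ∈ e))

open scoped Classical in
lemma mem_cover [Fintype V] {P : Finset (Sym2 V)} {v : V} :
    v ∈ cover P ↔ ∃ e ∈ P, v ∈ e := by
  simp [cover]

lemma cover_card [Fintype V] {P : Finset (Sym2 V)} (hP : IsMatchingSet G ↑P) :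
    (cover P).card = 2 * P.card := by
  classical
  rw [cover, Finset.card_biUnion]
  · rw [Finset.sum_congr rfl (g := fun _ => 2), Finset.sum_const, smul_eq_mul, mul_comm]
    intro e he
    have heG : e ∈ G.edgeSet := hP.1 (Finset.mem_coe.mpr he)
    revert heG
    refine e.ind (fun a b => ?_)
    intro heG
    have hab : a ≠ b := (SimpleGraph.mem_edgeSet G).mp heG |>.ne
    have : Finset.univ.filter (· ∈ s(a, b)) = {a, b} := by
      ext v
      simp [Sym2.mem_iff]
    rw [this, Finset.card_insert_of_notMem (by simpa using hab), Finset.card_singleton]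
  · intro e he f hf hef
    rw [Function.onFun, Finset.disjoint_left]
    intro v hv hv'
    simp only [Finset.mem_filter] at hv hv'
    exact hef (hP.2 v ⟨Finset.mem_coe.mpr he, hv.2⟩ ⟨Finset.mem_coe.mpr hf, hv'.2⟩)

lemma berge [Fintype V] (hM : IsMatchingSet G ↑M) (hN : IsMatchingSet G ↑N)
    (hcard : M.card < N.card) :
    ∃ (a w : V) (p : G.Walk a w), IsAugPath G ↑M p ∧
      (∀ e ∈ p.edges, e ∈ N \ M ∪ M \ N) ∧
      (∀ z ∈ p.support, ∃ f ∈ p.edges, f ∈ N ∧ z ∈ f) ∧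
      (∀ z ∈ p.support, z ≠ a → z ≠ w → ∃ f ∈ p.edges, f ∈ M ∧ z ∈ f) := by
  classical
  by_contra hcon
  push_neg at hcon
  -- every "exposed but N-covered" vertex leads to a failure walk
  set U : Finset V := cover N \ cover M with hUdef
  set W : Finset V := cover M \ cover N with hWdef
  have hfail : ∀ a ∈ U, ∃ w ∈ W, ∃ Tw, orb N M w Tw = some (a, true) ∧
      orb N M w (Tw + 1) = none := by
    intro a ha
    rw [hUdef, Finset.mem_sdiff, mem_cover, mem_cover] at ha
    obtain ⟨⟨e, heN, hae⟩, haM⟩ := ha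
    have hunm : Unmatched (↑M : Set (Sym2 V)) a := by
      intro f hf haf
      exact haM ⟨f, Finset.mem_coe.mp hf, haf⟩
    have hu2 : ∃ z, s(a, z) ∈ N \ M := by
      obtain ⟨z, rfl⟩ := Sym2.mem_iff_exists.mp hae
      refine ⟨z, Finset.mem_sdiff.mpr ⟨heN, fun hMm => haM ⟨_, hMm, Sym2.mem_mk_left a z⟩⟩⟩
    rcases main_dichotomy hM hN hunm hu2 with hgood | ⟨w, Tw, hwN, hwM, hT1, hT2⟩
    · obtain ⟨w, p, h1, h2, h3, h4⟩ := hgood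
      obtain ⟨z, hzs, hz1, hz2, hz3⟩ := hcon a w p h1 h2 h3
      obtain ⟨fe, hf, hfM, hzf⟩ := h4 z hzs hz1 hz2
      exact absurd hzf (hz3 fe hf hfM)
    · refine ⟨w, ?_, Tw, hT1, hT2⟩
      rw [hWdef, Finset.mem_sdiff, mem_cover, mem_cover]
      refine ⟨hwM, ?_⟩
      rintro ⟨f, hfN, hwf⟩
      exact hwN f (Finset.mem_coe.mpr hfN) hwf
  -- injectivity of the failure endpoint map
  have hinj : U.card ≤ W.card := by
    have hch : ∀ a : V, a ∈ U → ∃ w, w ∈ W ∧ ∃ Tw, orb N M w Tw = some (a, true) ∧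
        orb N M w (Tw + 1) = none := by
      intro a ha
      obtain ⟨w, hw, Tw, h1, h2⟩ := hfail a ha
      exact ⟨w, hw, Tw, h1, h2⟩
    choose f hfW hfT using hch
    -- turn into a total function
    refine Finset.card_le_card_of_injOn (fun a => if h : a ∈ U then f a h else a) ?_ ?_
    · intro a ha
      simp only [Finset.mem_coe] at ha ⊢
      rw [dif_pos ha]; exact hfW a ha
    · intro a1 h1 a2 h2 heq
      simp only [Finset.mem_coe] at h1 h2
      have heq' : (if h : a1 ∈ U then f a1 h else a1) = (if h : a2 ∈ U then f a2 h else a2) :=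
        heq
      rw [dif_pos h1, dif_pos h2] at heq'
      rename' heq' => heq
      obtain ⟨T1, hT11, hT12⟩ := hfT a1 h1
      obtain ⟨T2, hT21, hT22⟩ := hfT a2 h2
      rw [heq] at hT11 hT12
      obtain ⟨-, hsame⟩ := orb_terminal_unique hT11 hT12 hT21 hT22
      exact (some_pair_inj (congrArg some hsame)).1
  -- cardinality contradiction
  have hA : (cover M).card = 2 * M.card := cover_card hM
  have hB : (cover N).card = 2 * N.card := cover_card hN
  have h1 := Finset.card_sdiff_add_card_inter (cover N) (cover M)
  have h2 := Finset.card_sdiff_add_card_inter (cover M) (cover N)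
  rw [Finset.inter_comm] at h2
  rw [hUdef] at hinj
  rw [hWdef] at hinj
  omega

end Berge

section Count

lemma alt_count {α : Type*} [DecidableEq α] (P : Finset α) :
    ∀ (l : List α), (∀ (i : ℕ) (h : i < l.length), l.get ⟨i, h⟩ ∈ P ↔ Odd i) →
      l.length ≤ 2 * (l.filter (fun e => e ∈ P)).length + 1
  | [], _ => by simp
  | [x], _ => by simp
  | x :: y :: tl, h => by
    have h0 := h 0 (by simp)
    have h1 := h 1 (by simp)
    simp only [List.get] at h0 h1
    have hx : x ∉ P := by
      intro hxP
      have := h0.mp hxP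
      simp [Nat.odd_iff] at this
    have hy : y ∈ P := h1.mpr (by simp [Nat.odd_iff])
    have ih := alt_count P tl (fun i hi => by
      have hlt : i + 2 < (x :: y :: tl).length := by simp; omega
      have := h (i + 2) hlt
      simp only [List.get] at this
      have hpar : Odd (i + 2) ↔ Odd i := by rw [Nat.odd_iff, Nat.odd_iff]; omega
      rw [hpar] at this
      exact this)
    simp only [List.filter_cons, List.length_cons]
    simp [hx, hy]
    omega

lemma filter_compl_len {α : Type*} [DecidableEq α] (P Q : Finset α) :
    ∀ (l : List α), (∀ e ∈ l, (e ∈ Q ↔ e ∉ P)) →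
      (l.filter (fun e => e ∈ Q)).length + (l.filter (fun e => e ∈ P)).length = l.length := by
  intro l
  induction l with
  | nil => simp
  | cons a tl ih =>
    intro h
    have ha := h a (by simp)
    have ih' := ih (fun e he => h e (by simp [he]))
    by_cases haP : a ∈ P
    · have haQ : a ∉ Q := fun hq => (ha.mp hq) haP
      simp [List.filter_cons, haP, haQ]
      omega
    · have haQ : a ∈ Q := ha.mpr haP
      simp [List.filter_cons, haP, haQ]
      omega

end Count

section HKCount

variable {G : SimpleGraph V}

lemma matching_subset {P Q : Finset (Sym2 V)} (hP : IsMatchingSet G ↑P) (h : Q ⊆ P) :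
    IsMatchingSet G ↑Q := by
  constructor
  · intro e he
    exact hP.1 (Finset.mem_coe.mpr (h (Finset.mem_coe.mp he)))
  · intro v e he f hf
    exact hP.2 v ⟨Finset.mem_coe.mpr (h (Finset.mem_coe.mp he.1)), he.2⟩
      ⟨Finset.mem_coe.mpr (h (Finset.mem_coe.mp hf.1)), hf.2⟩

lemma vert_of_edge {a b : V} (q : G.Walk a b) {e : Sym2 V} (he : e ∈ q.edges) {x : V}
    (hx : x ∈ e) : x ∈ q.support := by
  obtain ⟨y, rfl⟩ := Sym2.mem_iff_exists.mp hx
  exact q.fst_mem_support_of_mem_edges he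

lemma hk_count [Fintype V] (G : SimpleGraph V) (L : ℕ) :
    ∀ (g : ℕ) (S : Finset V) (M N : Finset (Sym2 V)),
      IsMatchingSet G ↑M → IsMatchingSet G ↑N →
      (∀ e ∈ M, ∀ v ∈ S, v ∉ e) → (∀ e ∈ N, ∀ v ∈ S, v ∉ e) →
      (∀ (a b : V) (p : G.Walk a b), IsAugPath G ↑M p → (∀ z ∈ p.support, z ∉ S) →
        L ≤ p.length) →
      M.card + g ≤ N.card → g * (L + 1) + S.card ≤ Fintype.card V := by
  intro g
  induction g with
  | zero =>
    intro S M N _ _ _ _ _ _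
    simpa using (Finset.card_le_univ S).trans_eq Finset.card_univ
  | succ g ih =>
    intro S M N hM hN hMS hNS hpaths hcard
    classical
    obtain ⟨a, w, p, haug, hsym, hcovN, hcovM⟩ := berge hM hN (by omega)
    have hsupS : ∀ z ∈ p.support, z ∉ S := by
      intro z hz hzS
      obtain ⟨f, hf, hfN, hzf⟩ := hcovN z hz
      exact hNS f hfN z hzS hzf
    have hlen : L ≤ p.length := hpaths a w p haug hsupS
    set Pe : Finset (Sym2 V) := p.edges.toFinset with hPe
    set Vp : Finset V := p.support.toFinset with hVp
    have hndsup : p.support.Nodup := (SimpleGraph.Walk.isPath_def p).mp haug.1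
    have hnde : p.edges.Nodup := SimpleGraph.Walk.edges_nodup_of_support_nodup hndsup
    -- counting edges of p inside M and N
    have hint : ∀ (Q : Finset (Sym2 V)),
        (Q ∩ Pe).card = (p.edges.filter (fun e => e ∈ Q)).length := by
      intro Q
      have hQP : Q ∩ Pe = (p.edges.filter (fun e => e ∈ Q)).toFinset := by
        ext e
        simp only [Finset.mem_inter, hPe, List.mem_toFinset, List.mem_filter,
          decide_eq_true_eq]
        tauto
      rw [hQP, List.toFinset_card_of_nodup (hnde.filter _)]
    have halt' : ∀ (i : ℕ) (h : i < p.edges.length), p.edges.get ⟨i, h⟩ ∈ M ↔ Odd i := by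
      intro i h
      have := haug.2.2.1 i h
      simpa using this
    have hMcount := alt_count M p.edges halt'
    have hcompl : ∀ e ∈ p.edges, (e ∈ N ↔ e ∉ M) := by
      intro e he
      have hsy := hsym e he
      rw [Finset.mem_union] at hsy
      constructor
      · intro heN heM
        rcases hsy with hh | hh
        · exact (Finset.mem_sdiff.mp hh).2 heM
        · exact (Finset.mem_sdiff.mp hh).2 heN
      · intro heM
        rcases hsy with hh | hh
        · exact (Finset.mem_sdiff.mp hh).1
        · exact absurd (Finset.mem_sdiff.mp hh).1 heM
    have hsum := filter_compl_len M N p.edges hcompl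
    have hMint : (M ∩ Pe).card + ((M \ Pe)).card = M.card := by
      rw [add_comm]
      exact Finset.card_sdiff_add_card_inter M Pe
    have hNint : (N ∩ Pe).card + ((N \ Pe)).card = N.card := by
      rw [add_comm]
      exact Finset.card_sdiff_add_card_inter N Pe
    have hcard' : (M \ Pe).card + g ≤ (N \ Pe).card := by
      have h1 := hint M
      have h2 := hint N
      omega
    -- the new forbidden set
    set S' := S ∪ Vp with hS'
    have hdisj : Disjoint S Vp := by
      rw [Finset.disjoint_left]
      intro v hv hv'
      exact hsupS v (List.mem_toFinset.mp hv') hv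
    have hS'card : S'.card = S.card + Vp.card := Finset.card_union_of_disjoint hdisj
    have hVpcard : Vp.card = p.length + 1 := by
      rw [hVp, List.toFinset_card_of_nodup hndsup, SimpleGraph.Walk.length_support]
    -- avoid conditions
    have hMS' : ∀ e ∈ M \ Pe, ∀ v ∈ S', v ∉ e := by
      intro e he v hv hve
      obtain ⟨heM, hePe⟩ := Finset.mem_sdiff.mp he
      rw [hS', Finset.mem_union] at hv
      rcases hv with hv | hv
      · exact hMS e heM v hv hve
      · have hvs : v ∈ p.support := List.mem_toFinset.mp hv
        by_cases hvu : v = a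
        · exact haug.2.2.2.1 e (Finset.mem_coe.mpr heM) (hvu ▸ hve)
        by_cases hvw : v = w
        · exact haug.2.2.2.2 e (Finset.mem_coe.mpr heM) (hvw ▸ hve)
        obtain ⟨f, hfp, hfM, hvf⟩ := hcovM v hvs hvu hvw
        have hef : e = f := hM.2 v ⟨Finset.mem_coe.mpr heM, hve⟩ ⟨Finset.mem_coe.mpr hfM, hvf⟩
        exact hePe (by rw [hef]; exact List.mem_toFinset.mpr hfp)
    have hNS' : ∀ e ∈ N \ Pe, ∀ v ∈ S', v ∉ e := by
      intro e he v hv hve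
      obtain ⟨heN, hePe⟩ := Finset.mem_sdiff.mp he
      rw [hS', Finset.mem_union] at hv
      rcases hv with hv | hv
      · exact hNS e heN v hv hve
      · have hvs : v ∈ p.support := List.mem_toFinset.mp hv
        obtain ⟨f, hfp, hfN, hvf⟩ := hcovN v hvs
        have hef : e = f := hN.2 v ⟨Finset.mem_coe.mpr heN, hve⟩ ⟨Finset.mem_coe.mpr hfN, hvf⟩
        exact hePe (by rw [hef]; exact List.mem_toFinset.mpr hfp)
    -- transfer of the augmenting-path length hypothesis
    have hpaths' : ∀ (a1 b1 : V) (q : G.Walk a1 b1), IsAugPath G ↑(M \ Pe) q →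
        (∀ z ∈ q.support, z ∉ S') → L ≤ q.length := by
      intro a1 b1 q hq hqS
      obtain ⟨hq1, hq2, hq3, hq4, hq5⟩ := hq
      have hMM' : ∀ e ∈ q.edges, (e ∈ M ↔ e ∈ M \ Pe) := by
        intro e he
        constructor
        · intro heM
          rw [Finset.mem_sdiff]
          refine ⟨heM, fun hePe => ?_⟩
          have hep : e ∈ p.edges := List.mem_toFinset.mp hePe
          have hx0 : e.out.1 ∈ e := Sym2.out_fst_mem e
          have h1 : e.out.1 ∈ q.support := vert_of_edge q he hx0
          have h2 : e.out.1 ∈ p.support := vert_of_edge p hep hx0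
          exact hqS _ h1 (Finset.mem_union_right _ (List.mem_toFinset.mpr h2))
        · intro heM'
          exact (Finset.mem_sdiff.mp heM').1
      have hunm : ∀ (z : V), z ∈ q.support → Unmatched (↑(M \ Pe) : Set (Sym2 V)) z →
          Unmatched (↑M : Set (Sym2 V)) z := by
        intro z hzs hz e he hze
        have heM : e ∈ M := Finset.mem_coe.mp he
        by_cases hePe : e ∈ Pe
        · have hep : e ∈ p.edges := List.mem_toFinset.mp hePe
          have h2 : z ∈ p.support := vert_of_edge p hep hze
          exact hqS z hzs (Finset.mem_union_right _ (List.mem_toFinset.mpr h2))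
        · exact hz e (Finset.mem_coe.mpr (Finset.mem_sdiff.mpr ⟨heM, hePe⟩)) hze
      refine hpaths a1 b1 q ⟨hq1, hq2, ?_, ?_, ?_⟩
        (fun z hz hzS => hqS z hz (Finset.mem_union_left _ hzS))
      · intro i h
        have h3 := hq3 i h
        have hmem : q.edges.get ⟨i, h⟩ ∈ q.edges := List.get_mem _ _
        have := hMM' _ hmem
        rw [Finset.mem_coe] at h3 ⊢
        rw [this]
        exact h3
      · exact hunm a1 q.start_mem_support hq4
      · exact hunm b1 q.end_mem_support hq5
    have hIH := ih S' (M \ Pe) (N \ Pe) (matching_subset hM Finset.sdiff_subset)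
      (matching_subset hN Finset.sdiff_subset) hMS' hNS' hpaths' hcard'
    have hexp : (g + 1) * (L + 1) = g * (L + 1) + (L + 1) := by ring
    omega

end HKCount

end HK99

/-- `O(√n)` iterations suffice: starting from the empty matching, if each
iteration augments a maximal set of vertex-disjoint shortest augmenting paths — so that
after `k` iterations every augmenting path w.r.t. the current matching `M k` has length
at least `2k - 1`, and the matching grows strictly as long as it is not maximum — then
after at most `2⌈√(n/2)⌉ + 2` iterations the matching is maximum. -/
theorem sqrt_iterations_suffice [Fintype V] (G : SimpleGraph V)
    (M : ℕ → Finset (Sym2 V)) (Mstar : Finset (Sym2 V))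
    (hmatch : ∀ k, IsMatchingSet G ↑(M k)) (hMstar : IsMatchingSet G ↑Mstar)
    (hmax : ∀ N : Finset (Sym2 V), IsMatchingSet G ↑N → N.card ≤ Mstar.card)
    (hzero : M 0 = ∅)
    (haug : ∀ k (u v : V) (p : G.Walk u v), IsAugPath G ↑(M k) p → 2 * k - 1 ≤ p.length)
    (hstep : ∀ k, (M k).card < Mstar.card → (M k).card < (M (k + 1)).card) :
    ∃ k ≤ 2 * ⌈Real.sqrt ((Fintype.card V : ℝ) / 2)⌉₊ + 2,
      (M k).card = Mstar.card := by
  classical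
  set n := Fintype.card V with hn
  set s := ⌈Real.sqrt ((n : ℝ) / 2)⌉₊ with hs
  have hn2s : n ≤ 2 * s * s := by
    have h1 : Real.sqrt ((n : ℝ) / 2) ≤ (s : ℝ) := Nat.le_ceil _
    have h0 : (0 : ℝ) ≤ (n : ℝ) / 2 := by positivity
    have h2 := Real.sq_sqrt h0
    have h3 : (n : ℝ) ≤ 2 * (s : ℝ) * s := by
      nlinarith [Real.sqrt_nonneg ((n : ℝ) / 2)]
    exact_mod_cast h3
  set k1 := s + 1 with hk1
  have hle : (M k1).card ≤ Mstar.card := hmax _ (hmatch _)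
  set g1 := Mstar.card - (M k1).card with hg1
  have hcount : g1 * (2 * k1 - 1 + 1) + (∅ : Finset V).card ≤ n := by
    refine HK99.hk_count G (2 * k1 - 1) g1 ∅ (M k1) Mstar (hmatch k1) hMstar
      (by simp) (by simp) (fun a b p hp _ => haug k1 a b p hp) (by omega)
  rw [Finset.card_empty, add_zero] at hcount
  have hL1 : 2 * k1 - 1 + 1 = 2 * k1 := by omega
  rw [hL1] at hcount
  have hg1le : g1 ≤ s + 1 := by
    by_contra hc
    push_neg at hc
    have hmul : (s + 2) * (2 * k1) ≤ g1 * (2 * k1) := Nat.mul_le_mul_right _ (by omega)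
    have hexp : (s + 2) * (2 * k1) = 2 * s * s + 6 * s + 4 := by rw [hk1]; ring
    omega
  have grow : ∀ d, (∃ j ≤ k1 + d, (M j).card = Mstar.card) ∨
      (M k1).card + d ≤ (M (k1 + d)).card := by
    intro d
    induction d with
    | zero => right; simp
    | succ d ihd =>
      rcases ihd with ⟨j, hj, hje⟩ | hge
      · left; exact ⟨j, by omega, hje⟩
      · by_cases he : (M (k1 + d)).card = Mstar.card
        · left; exact ⟨k1 + d, by omega, he⟩
        · right
          have hlt : (M (k1 + d)).card < Mstar.card :=
            lt_of_le_of_ne (hmax _ (hmatch _)) he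
          have hst := hstep (k1 + d) hlt
          have heq : k1 + (d + 1) = (k1 + d) + 1 := by omega
          rw [heq]
          omega
  rcases grow g1 with ⟨j, hj, hje⟩ | hge
  · exact ⟨j, by omega, hje⟩
  · refine ⟨k1 + g1, by omega, ?_⟩
    have h2 : (M (k1 + g1)).card ≤ Mstar.card := hmax _ (hmatch _)
    omega
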